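/- Let α > 0, ε > 0, and let f : ℝⁿ → ℝ, g : ℝⁿ → ℝᵐ, h : ℝⁿ → ℝˡ be differentiable. Fix θ ∈ ℝⁿ and suppose (ξ*, u, v) satisfies the QP-KKT conditions at θ. Let q ∈ ℝᵐ satisfy qᵢ ≥ 0 for all i, qᵢ = 0 whenever gᵢ(θ) < 0, and qᵢ = 1 whenever gᵢ(θ) > 0; let r ∈ ℝˡ satisfy rⱼ = sign(hⱼ(θ)) whenever hⱼ(θ) ≠ 0. Then the element p := ⟪∇f(θ), ξ*⟫ + (1/ε) Σᵢ qᵢ ⟪∇gᵢ(θ), ξ*⟫ + (1/ε) Σⱼ rⱼ ⟪∇hⱼ(θ), ξ*⟫ of the set-valued Lie derivative of the penalty function V_ε satisfies p ≤ −‖ξ*‖² + α Σᵢ [gᵢ(θ)]₊ (uᵢ − 1/ε) + α Σⱼ |hⱼ(θ)| (|vⱼ| − 1/ε), where [x]₊ = max{x, 0}. (The key Lyapunov decrease bound, inequality (19) in the paper.) -/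
import Mathlib


open scoped RealInnerProductSpace BigOperators

/-- The KKT conditions of the safe-gradient-flow quadratic program at `θ`,
with primal point `ξ` and multipliers `(u, v)`. -/
def QPKKT {n m l : ℕ} (α : ℝ)
    (f : EuclideanSpace ℝ (Fin n) → ℝ)
    (g : Fin m → EuclideanSpace ℝ (Fin n) → ℝ)
    (h : Fin l → EuclideanSpace ℝ (Fin n) → ℝ)
    (θ ξ : EuclideanSpace ℝ (Fin n)) (u : Fin m → ℝ) (v : Fin l → ℝ) : Prop :=
  ξ + gradient f θ + ∑ i, u i • gradient (g i) θ + ∑ j, v j • gradient (h j) θ = 0 ∧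
  (∀ i, ⟪gradient (g i) θ, ξ⟫ + α * g i θ ≤ 0) ∧
  (∀ j, ⟪gradient (h j) θ, ξ⟫ + α * h j θ = 0) ∧
  (∀ i, 0 ≤ u i) ∧
  ∑ i, u i * (⟪gradient (g i) θ, ξ⟫ + α * g i θ) = 0

/-- The key Lyapunov decrease bound (inequality (19)): any element `p` of the set-valued Lie
derivative of the penalty function `V_ε` along a QP-KKT point `ξ*` satisfies
`p ≤ -‖ξ*‖² + α Σᵢ [gᵢ(θ)]₊ (uᵢ - 1/ε) + α Σⱼ |hⱼ(θ)| (|vⱼ| - 1/ε)`. -/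
theorem lyapunov_decrease_bound {n m l : ℕ} (α ε : ℝ) (hα : 0 < α) (hε : 0 < ε)
    (f : EuclideanSpace ℝ (Fin n) → ℝ)
    (g : Fin m → EuclideanSpace ℝ (Fin n) → ℝ)
    (h : Fin l → EuclideanSpace ℝ (Fin n) → ℝ)
    (hf : Differentiable ℝ f) (hg : ∀ i, Differentiable ℝ (g i))
    (hh : ∀ j, Differentiable ℝ (h j))
    (θ ξstar : EuclideanSpace ℝ (Fin n)) (u : Fin m → ℝ) (v : Fin l → ℝ)
    (hkkt : QPKKT α f g h θ ξstar u v)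
    (q : Fin m → ℝ) (hq_nonneg : ∀ i, 0 ≤ q i)
    (hq_neg : ∀ i, g i θ < 0 → q i = 0)
    (hq_pos : ∀ i, 0 < g i θ → q i = 1)
    (r : Fin l → ℝ) (hr : ∀ j, h j θ ≠ 0 → r j = Real.sign (h j θ)) :
    ⟪gradient f θ, ξstar⟫
        + (1 / ε) * ∑ i, q i * ⟪gradient (g i) θ, ξstar⟫
        + (1 / ε) * ∑ j, r j * ⟪gradient (h j) θ, ξstar⟫
      ≤ -‖ξstar‖ ^ 2 + α * ∑ i, max (g i θ) 0 * (u i - 1 / ε)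
        + α * ∑ j, |h j θ| * (|v j| - 1 / ε) := by
  obtain ⟨ha, hb, hc, hd, he⟩ := hkkt
  have hA : ⟪ξstar, ξstar⟫ + ⟪gradient f θ, ξstar⟫
      + ∑ i, u i * ⟪gradient (g i) θ, ξstar⟫
      + ∑ j, v j * ⟪gradient (h j) θ, ξstar⟫ = 0 := by
    have := congrArg (fun w : EuclideanSpace ℝ (Fin n) => ⟪w, ξstar⟫) ha
    simpa [inner_add_left, sum_inner, real_inner_smul_left, Finset.mul_sum, mul_assoc] using this
  have hnorm : ⟪ξstar, ξstar⟫ = ‖ξstar‖ ^ 2 := real_inner_self_eq_norm_sq ξstar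
  -- complementary slackness termwise
  have hcs : ∀ i, u i * (⟪gradient (g i) θ, ξstar⟫ + α * g i θ) = 0 := by
    intro i
    have hnp : ∀ k ∈ Finset.univ,
        u k * (⟪gradient (g k) θ, ξstar⟫ + α * g k θ) ≤ 0 :=
      fun k _ => mul_nonpos_of_nonneg_of_nonpos (hd k) (hb k)
    have := (Finset.sum_eq_zero_iff_of_nonpos hnp).mp he i (Finset.mem_univ i)
    exact this
  have key_g : ∑ i, ((1/ε) * (q i * ⟪gradient (g i) θ, ξstar⟫)
        - u i * ⟪gradient (g i) θ, ξstar⟫)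
      ≤ ∑ i, α * (max (g i θ) 0 * (u i - 1/ε)) := by
    apply Finset.sum_le_sum
    intro i _
    have hGle : ⟪gradient (g i) θ, ξstar⟫ ≤ -(α * g i θ) := by linarith [hb i]
    have hcsi := hcs i
    rcases lt_trichotomy (g i θ) 0 with hlt | heq | hgt
    · have hq0 := hq_neg i hlt
      have hmax : max (g i θ) 0 = 0 := max_eq_right hlt.le
      rw [hq0, hmax]
      have : u i * ⟪gradient (g i) θ, ξstar⟫ = -(α * (u i * g i θ)) := by
        nlinarith [hcsi]
      nlinarith [mul_nonneg (hd i) (neg_nonneg.mpr hlt.le)]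
    · have hmax : max (g i θ) 0 = 0 := by rw [heq]; simp
      rw [hmax]
      have hG0 : ⟪gradient (g i) θ, ξstar⟫ ≤ 0 := by rw [heq] at hGle; simpa using hGle
      have hu : u i * ⟪gradient (g i) θ, ξstar⟫ = 0 := by rw [heq] at hcsi; simpa using hcsi
      have : (1/ε) * (q i * ⟪gradient (g i) θ, ξstar⟫) ≤ 0 := by
        apply mul_nonpos_of_nonneg_of_nonpos (by positivity)
        exact mul_nonpos_of_nonneg_of_nonpos (hq_nonneg i) hG0
      nlinarith
    · have hq1 := hq_pos i hgt
      have hmax : max (g i θ) 0 = g i θ := max_eq_left hgt.le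
      rw [hq1, hmax]
      have hu : u i * ⟪gradient (g i) θ, ξstar⟫ = -(α * (u i * g i θ)) := by
        nlinarith [hcsi]
      have h1 : (1/ε) * ⟪gradient (g i) θ, ξstar⟫ ≤ (1/ε) * (-(α * g i θ)) := by
        apply mul_le_mul_of_nonneg_left hGle (by positivity)
      nlinarith
  have key_h : ∑ j, ((1/ε) * (r j * ⟪gradient (h j) θ, ξstar⟫)
        - v j * ⟪gradient (h j) θ, ξstar⟫)
      ≤ ∑ j, α * (|h j θ| * (|v j| - 1/ε)) := by
    apply Finset.sum_le_sum
    intro j _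
    have hH : ⟪gradient (h j) θ, ξstar⟫ = -(α * h j θ) := by linarith [hc j]
    rw [hH]
    rcases eq_or_ne (h j θ) 0 with h0 | h0
    · simp [h0]
    · have hrj := hr j h0
      have hsign : r j * h j θ = |h j θ| := by
        rcases h0.lt_or_gt with hlt | hgt
        · rw [hrj, Real.sign_of_neg hlt, abs_of_neg hlt]; ring
        · rw [hrj, Real.sign_of_pos hgt, abs_of_pos hgt]; ring
      have hvb : v j * h j θ ≤ |v j| * |h j θ| := by
        calc v j * h j θ ≤ |v j * h j θ| := le_abs_self _
        _ = |v j| * |h j θ| := abs_mul _ _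
      have h1 : α * (v j * h j θ) ≤ α * (|v j| * |h j θ|) :=
        mul_le_mul_of_nonneg_left hvb hα.le
      have h2 : 1/ε * (r j * -(α * h j θ)) = -(α * |h j θ|) / ε := by
        rw [← hsign]; ring
      rw [h2]
      have h3 : α * (|h j θ| * (|v j| - 1/ε))
          = α * (|v j| * |h j θ|) - (α * |h j θ|)/ε := by ring
      have h4 : -(α * |h j θ|) / ε - v j * -(α * h j θ)
          = α * (v j * h j θ) - (α * |h j θ|)/ε := by ring
      rw [h3, h4]; linarith
  have hsum1 : ∑ i, ((1/ε) * (q i * ⟪gradient (g i) θ, ξstar⟫)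
        - u i * ⟪gradient (g i) θ, ξstar⟫)
      = (1/ε) * ∑ i, q i * ⟪gradient (g i) θ, ξstar⟫
        - ∑ i, u i * ⟪gradient (g i) θ, ξstar⟫ := by
    rw [Finset.sum_sub_distrib, Finset.mul_sum]
  have hsum2 : ∑ j, ((1/ε) * (r j * ⟪gradient (h j) θ, ξstar⟫)
        - v j * ⟪gradient (h j) θ, ξstar⟫)
      = (1/ε) * ∑ j, r j * ⟪gradient (h j) θ, ξstar⟫
        - ∑ j, v j * ⟪gradient (h j) θ, ξstar⟫ := by
    rw [Finset.sum_sub_distrib, Finset.mul_sum]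
  have hrhs1 : ∑ i, α * (max (g i θ) 0 * (u i - 1/ε))
      = α * ∑ i, max (g i θ) 0 * (u i - 1/ε) := by rw [Finset.mul_sum]
  have hrhs2 : ∑ j, α * (|h j θ| * (|v j| - 1/ε))
      = α * ∑ j, |h j θ| * (|v j| - 1/ε) := by rw [Finset.mul_sum]
  rw [hsum1, hrhs1] at key_g
  rw [hsum2, hrhs2] at key_h
  linarith [key_g, key_h, hA, hnorm.symm ▸ hA]
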